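/- Let δ₇ = [[2,7],[7,25]], α = [[3,2],[−5,−3]] and S = [[0,−1],[1,0]] in SL(2,ℤ), and set α₁ = α·S, α₂ = δ₇·S, α₃ = S. Denote by ᾱ₁, ᾱ₂, ᾱ₃ the images of α₁, α₂, α₃ in PSL(2, ℤ/7). Then ᾱ₁² = ᾱ₂² = ᾱ₃² = (ᾱ₁ᾱ₂)³ = (ᾱ₂ᾱ₃)³ = (ᾱ₃ᾱ₁)² = 1 (the defining relations of the symmetric group S₄), and the subgroup of PSL(2, ℤ/7) generated by the images of δ₇, α and S is isomorphic to the symmetric group S₄ on four letters, and is a maximal proper subgroup of PSL(2, ℤ/7). -/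

import Mathlib

open Matrix
open scoped MatrixGroups

/-- Reduction of `SL(2, ℤ)` modulo `p`, followed by the quotient map to `PSL(2, ℤ/p)`. -/
def toPSL (p : ℕ) : SL(2, ℤ) →* PSL(2, ZMod p) :=
  (QuotientGroup.mk' (Subgroup.center (SpecialLinearGroup (Fin 2) (ZMod p)))).comp
    (Matrix.SpecialLinearGroup.map (Int.castRingHom (ZMod p)))

/-- `δ₇ = [[2,7],[7,25]] ∈ SL(2, ℤ)`. -/
def delta7 : SL(2, ℤ) := ⟨!![2, 7; 7, 25], by norm_num [Matrix.det_fin_two_of]⟩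

/-- `α = [[3,2],[−5,−3]] ∈ SL(2, ℤ)`. -/
def alpha : SL(2, ℤ) := ⟨!![3, 2; -5, -3], by norm_num [Matrix.det_fin_two_of]⟩

/-- `S = [[0,−1],[1,0]] ∈ SL(2, ℤ)`. -/
def Smat : SL(2, ℤ) := ⟨!![0, -1; 1, 0], by norm_num [Matrix.det_fin_two_of]⟩

/-! ### Auxiliary decidability and computation infrastructure -/

section Aux

open Equiv

abbrev SL7 := Matrix.SpecialLinearGroup (Fin 2) (ZMod 7)

instance : Fact (Even (Fintype.card (Fin 2))) := ⟨by simp⟩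

instance : DecidableEq (Matrix (Fin 2) (Fin 2) (ZMod 7)) :=
  fun M N =>
    haveI : Decidable (∀ i j, M i j = N i j) :=
      @Fintype.decidableForallFintype _ _ (fun i => @Fintype.decidableForallFintype _ _
        (fun j => decEq (M i j) (N i j)) _) _
    decidable_of_iff (∀ i j, M i j = N i j)
    ⟨fun h => by ext i j; exact h i j, fun h i j => by rw [h]⟩

instance : DecidableEq SL7 :=
  fun A B => decidable_of_iff (A.1 = B.1) Subtype.ext_iff.symm

lemma sq_eq_one_zmod7 : ∀ r : ZMod 7, r ^ 2 = 1 → r = 1 ∨ r = -1 := by decide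

theorem mem_center_iff7 (A : SL7) :
    A ∈ Subgroup.center SL7 ↔ A = 1 ∨ A = -1 := by
  rw [Matrix.SpecialLinearGroup.mem_center_iff]
  constructor
  · rintro ⟨r, hr, hA⟩
    rw [Fintype.card_fin] at hr
    rcases sq_eq_one_zmod7 r hr with rfl | rfl
    · exact Or.inl (Subtype.ext (hA.symm.trans (by decide)))
    · exact Or.inr (Subtype.ext (hA.symm.trans (by decide)))
  · rintro (rfl | rfl)
    · exact ⟨1, by rw [Fintype.card_fin]; decide, by decide⟩
    · exact ⟨-1, by rw [Fintype.card_fin]; decide, by decide⟩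

instance : DecidablePred (· ∈ Subgroup.center SL7) :=
  fun A => decidable_of_iff _ (mem_center_iff7 A).symm

instance : DecidableEq (PSL(2, ZMod 7)) := fun a b =>
  Quotient.recOnSubsingleton₂ a b fun x y =>
    decidable_of_iff (x⁻¹ * y ∈ Subgroup.center SL7)
      ⟨fun h => Quotient.sound (QuotientGroup.leftRel_apply.mpr h),
       fun h => QuotientGroup.leftRel_apply.mp (Quotient.exact h)⟩

instance : Finite (PSL(2, ZMod 7)) := Quotient.finite _

/-- Build an element of `PSL(2, ℤ/7)` from four entries. -/
def mkP (a b c d : ZMod 7) (h : (!![a, b; c, d]).det = 1 := by decide) : PSL(2, ZMod 7) :=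
  QuotientGroup.mk ⟨!![a, b; c, d], h⟩

/-- An explicit function from `S₄` onto the `S₄`-subgroup of `PSL(2, ℤ/7)`. -/
def fTable (σ : Perm (Fin 4)) : PSL(2, ZMod 7) :=
  match (σ 0).val, (σ 1).val, (σ 2).val with
  | 0, 1, 2 => mkP 1 0 0 1
  | 0, 1, 3 => mkP 0 1 6 0
  | 0, 2, 1 => mkP 0 2 3 0
  | 0, 2, 3 => mkP 2 0 0 4
  | 0, 3, 1 => mkP 3 0 0 5
  | 0, 3, 2 => mkP 0 3 2 0
  | 1, 0, 2 => mkP 2 4 4 5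
  | 1, 0, 3 => mkP 3 2 2 4
  | 1, 2, 0 => mkP 2 3 6 6
  | 1, 2, 3 => mkP 3 5 6 1
  | 1, 3, 0 => mkP 1 1 2 3
  | 1, 3, 2 => mkP 1 6 3 5
  | 2, 0, 1 => mkP 1 3 6 5
  | 2, 0, 3 => mkP 3 6 5 1
  | 2, 1, 0 => mkP 2 2 1 5
  | 2, 1, 3 => mkP 2 5 5 6
  | 2, 3, 0 => mkP 3 1 4 4
  | 2, 3, 1 => mkP 1 4 4 3
  | 3, 0, 1 => mkP 1 2 1 3
  | 3, 0, 2 => mkP 2 6 3 6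
  | 3, 1, 0 => mkP 1 5 5 5
  | 3, 1, 2 => mkP 2 1 2 5
  | 3, 2, 0 => mkP 3 3 3 1
  | 3, 2, 1 => mkP 3 4 1 4
  | _, _, _ => 1

set_option maxRecDepth 40000 in
/-- `fTable` is multiplicative. -/
lemma fTable_mul : ∀ x y : Perm (Fin 4), fTable (x * y) = fTable x * fTable y := by decide

/-- `fTable` as a monoid hom. -/
def F : Perm (Fin 4) →* PSL(2, ZMod 7) :=
  { toFun := fTable, map_one' := by decide, map_mul' := fTable_mul }

set_option maxRecDepth 40000 in
lemma F_injective : Function.Injective F :=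
  (injective_iff_map_eq_one F).mpr (by decide)

/-- The adjacent transpositions generating `S₄`. -/
def sw1 : Perm (Fin 4) := Equiv.swap 0 1
def sw2 : Perm (Fin 4) := Equiv.swap 1 2
def sw3 : Perm (Fin 4) := Equiv.swap 2 3

lemma closure_sw_eq_top : Subgroup.closure {sw1, sw2, sw3} = (⊤ : Subgroup (Perm (Fin 4))) := by
  apply top_le_iff.mp
  set K := Subgroup.closure ({sw1, sw2, sw3} : Set (Perm (Fin 4))) with hK
  have m1 : sw1 ∈ K := Subgroup.subset_closure (by simp)
  have m2 : sw2 ∈ K := Subgroup.subset_closure (by simp)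
  have m3 : sw3 ∈ K := Subgroup.subset_closure (by simp)
  have m02 : Equiv.swap (0 : Fin 4) 2 ∈ K := by
    have h : Equiv.swap (0 : Fin 4) 2 = sw1 * sw2 * sw1 := by decide
    rw [h]; exact mul_mem (mul_mem m1 m2) m1
  have m13 : Equiv.swap (1 : Fin 4) 3 ∈ K := by
    have h : Equiv.swap (1 : Fin 4) 3 = sw2 * sw3 * sw2 := by decide
    rw [h]; exact mul_mem (mul_mem m2 m3) m2
  have m03 : Equiv.swap (0 : Fin 4) 3 ∈ K := by
    have h : Equiv.swap (0 : Fin 4) 3 = sw3 * (sw1 * sw2 * sw1) * sw3 := by decide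
    rw [h]; exact mul_mem (mul_mem m3 (mul_mem (mul_mem m1 m2) m1)) m3
  have m01 : Equiv.swap (0 : Fin 4) 1 ∈ K := m1
  have m12 : Equiv.swap (1 : Fin 4) 2 ∈ K := m2
  have m23 : Equiv.swap (2 : Fin 4) 3 ∈ K := m3
  have hswap : ∀ x y : Fin 4, Equiv.swap x y ∈ K := by
    intro x y
    fin_cases x <;> fin_cases y <;>
      first
        | (simp only [Equiv.swap_self]; exact (Subgroup.one_mem K : Equiv.refl (Fin 4) ∈ K))
        | assumption
        | (rw [Equiv.swap_comm]; assumption)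
  rw [← Equiv.Perm.closure_isSwap]
  refine (Subgroup.closure_le K).mpr ?_
  rintro σ ⟨x, y, -, rfl⟩
  exact hswap x y

end Aux

set_option maxRecDepth 100000

/-- With `α₁ = α·S`, `α₂ = δ₇·S`, `α₃ = S`, the images `ᾱ₁, ᾱ₂, ᾱ₃` in `PSL(2, ℤ/7)` satisfy
the defining relations of `S₄`, and the subgroup of `PSL(2, ℤ/7)` generated by the images of
`δ₇`, `α` and `S` is isomorphic to `S₄` and is a maximal proper subgroup. -/
theorem closure_delta7_alpha_S_eq_S4 :
    (toPSL 7 (alpha * Smat)) ^ 2 = 1 ∧ (toPSL 7 (delta7 * Smat)) ^ 2 = 1 ∧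
      (toPSL 7 Smat) ^ 2 = 1 ∧
      (toPSL 7 (alpha * Smat) * toPSL 7 (delta7 * Smat)) ^ 3 = 1 ∧
      (toPSL 7 (delta7 * Smat) * toPSL 7 Smat) ^ 3 = 1 ∧
      (toPSL 7 Smat * toPSL 7 (alpha * Smat)) ^ 2 = 1 ∧
      Nonempty ((Subgroup.closure {toPSL 7 delta7, toPSL 7 alpha, toPSL 7 Smat}) ≃*
        Equiv.Perm (Fin 4)) ∧
      IsCoatom (Subgroup.closure {toPSL 7 delta7, toPSL 7 alpha, toPSL 7 Smat}) := by
  have hFd : F (sw2 * sw3) = toPSL 7 delta7 := by decide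
  have hFa : F (sw1 * sw3) = toPSL 7 alpha := by decide
  have hFs : F sw3 = toPSL 7 Smat := by decide
  have hF1 : F sw1 = toPSL 7 alpha * toPSL 7 Smat := by decide
  have hF2 : F sw2 = toPSL 7 delta7 * toPSL 7 Smat := by decide
  have hd : toPSL 7 delta7 ∈ Subgroup.closure {toPSL 7 delta7, toPSL 7 alpha, toPSL 7 Smat} :=
    Subgroup.subset_closure (by simp)
  have ha : toPSL 7 alpha ∈ Subgroup.closure {toPSL 7 delta7, toPSL 7 alpha, toPSL 7 Smat} :=
    Subgroup.subset_closure (by simp)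
  have hs : toPSL 7 Smat ∈ Subgroup.closure {toPSL 7 delta7, toPSL 7 alpha, toPSL 7 Smat} :=
    Subgroup.subset_closure (by simp)
  have range_eq : F.range = Subgroup.closure {toPSL 7 delta7, toPSL 7 alpha, toPSL 7 Smat} := by
    apply le_antisymm
    · rw [MonoidHom.range_eq_map, ← closure_sw_eq_top, MonoidHom.map_closure]
      refine (Subgroup.closure_le _).mpr ?_
      rintro _ ⟨x, hx, rfl⟩
      simp only [Set.mem_insert_iff, Set.mem_singleton_iff] at hx
      rcases hx with rfl | rfl | rfl
      · rw [hF1]; exact mul_mem ha hs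
      · rw [hF2]; exact mul_mem hd hs
      · rw [hFs]; exact hs
    · refine (Subgroup.closure_le _).mpr ?_
      rintro x hx
      simp only [Set.mem_insert_iff, Set.mem_singleton_iff] at hx
      rcases hx with rfl | rfl | rfl
      · exact ⟨sw2 * sw3, hFd⟩
      · exact ⟨sw1 * sw3, hFa⟩
      · exact ⟨sw3, hFs⟩
  have iso : (Subgroup.closure {toPSL 7 delta7, toPSL 7 alpha, toPSL 7 Smat}) ≃*
      Equiv.Perm (Fin 4) :=
    (MulEquiv.subgroupCongr range_eq).symm.trans (MonoidHom.ofInjective F_injective).symm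
  have cardPerm : Nat.card (Equiv.Perm (Fin 4)) = 24 := by
    rw [Nat.card_eq_fintype_card, Fintype.card_perm, Fintype.card_fin]
    norm_num [Nat.factorial]
  have cardH : Nat.card (Subgroup.closure {toPSL 7 delta7, toPSL 7 alpha, toPSL 7 Smat}) = 24 :=
    (Nat.card_congr iso.toEquiv).trans cardPerm
  have hSL : Nat.card SL7 = 336 := by rw [Nat.card_eq_fintype_card]; decide
  have hcen : Nat.card (Subgroup.center SL7) = 2 := by rw [Nat.card_eq_fintype_card]; decide
  have hPSL : Nat.card (PSL(2, ZMod 7)) = 168 := by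
    have h := Subgroup.card_eq_card_quotient_mul_card_subgroup (Subgroup.center SL7)
    rw [hSL, hcen] at h
    have : Nat.card (PSL(2, ZMod 7)) = Nat.card (SL7 ⧸ Subgroup.center SL7) := rfl
    omega
  refine ⟨by decide, by decide, by decide, by decide, by decide, by decide, ⟨iso⟩, ?_, ?_⟩
  · intro h
    rw [h] at cardH
    rw [Subgroup.card_top, hPSL] at cardH
    omega
  · intro K hK
    have h24 : (24 : ℕ) ∣ Nat.card K := cardH ▸ Subgroup.card_dvd_of_le hK.le
    have h168 : Nat.card K ∣ 168 := hPSL ▸ Subgroup.card_subgroup_dvd_card K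
    obtain ⟨m, hm⟩ := h24
    have hm7 : m ∣ 7 := by
      have h' : 24 * m ∣ 24 * 7 := by rw [← hm]; simpa using h168
      exact (Nat.mul_dvd_mul_iff_left (by norm_num : 0 < 24)).mp h'
    rcases (Nat.Prime.eq_one_or_self_of_dvd (by norm_num) m hm7) with h1 | h7
    · exfalso
      refine hK.ne (Subgroup.eq_of_le_of_card_ge hK.le ?_)
      rw [hm, h1, cardH]
    · exact Subgroup.eq_top_of_card_eq K (by rw [hm, h7, hPSL])
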